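/- In the algebra B_q(f), for every positive integer m the following identities hold: w·uᵐ = qᵐ·uᵐ·w + ∑_{j=0}^{d} [m]_{q^{j+1}}·c_j·vʲ·uᵐ⁻¹ and w·vᵐ = q⁻ᵐ·vᵐ·w + ∑_{j=0}^{d} [m]_{q^{-(j+1)}}·c_j·uʲ·vᵐ⁻¹, where for r ∈ k, [m]_r := ∑_{i=0}^{m-1} rⁱ. -/

import Mathlib

open FreeAlgebra

/-- The defining relations of the algebra `B_q(f)` for `f = ∑_{j=0}^{d} c_j tʲ`:
generators `0 ↦ u`, `1 ↦ v`, `2 ↦ w` subject to `uv = qvu`, `wu = quw + f(v)`,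
`wv = q⁻¹vw + f(u)`. -/
inductive BqfRel (k : Type*) [Field k] (q : k) (d : ℕ) (c : ℕ → k) :
    FreeAlgebra k (Fin 3) → FreeAlgebra k (Fin 3) → Prop
  | uv : BqfRel k q d c (ι k (0 : Fin 3) * ι k (1 : Fin 3))
      (q • (ι k (1 : Fin 3) * ι k (0 : Fin 3)))
  | wu : BqfRel k q d c (ι k (2 : Fin 3) * ι k (0 : Fin 3))
      (q • (ι k (0 : Fin 3) * ι k (2 : Fin 3)) +
        ∑ j ∈ Finset.range (d + 1), c j • ι k (1 : Fin 3) ^ j)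
  | wv : BqfRel k q d c (ι k (2 : Fin 3) * ι k (1 : Fin 3))
      (q⁻¹ • (ι k (1 : Fin 3) * ι k (2 : Fin 3)) +
        ∑ j ∈ Finset.range (d + 1), c j • ι k (0 : Fin 3) ^ j)

section Aux
variable {k A : Type*} [CommRing k] [Ring A] [Algebra k A]

lemma aux_comm1 (q : k) (a b : A) (hab : a * b = q • (b * a)) (j : ℕ) :
    a * b ^ j = q ^ j • (b ^ j * a) := by
  induction j with
  | zero => simp
  | succ n ih =>
      rw [pow_succ, ← mul_assoc, ih, smul_mul_assoc, mul_assoc, hab, mul_smul_comm,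
        smul_smul, ← mul_assoc, ← pow_succ, ← pow_succ]

lemma aux_comm2 (q : k) (a b : A) (hab : a * b = q • (b * a)) (m j : ℕ) :
    a ^ m * b ^ j = q ^ (m * j) • (b ^ j * a ^ m) := by
  induction m with
  | zero => simp
  | succ n ih =>
      rw [pow_succ, mul_assoc, aux_comm1 q a b hab j, mul_smul_comm, ← mul_assoc, ih,
        smul_mul_assoc, smul_smul, mul_assoc, ← pow_succ, ← pow_add]
      congr 2
      ring

lemma aux_main (q : k) (a b w : A) (d : ℕ) (c : ℕ → k)
    (hab : a * b = q • (b * a))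
    (hwa : w * a = q • (a * w) + ∑ j ∈ Finset.range (d + 1), c j • b ^ j) :
    ∀ m : ℕ, 0 < m → w * a ^ m = q ^ m • (a ^ m * w) +
      ∑ j ∈ Finset.range (d + 1),
        ((∑ i ∈ Finset.range m, (q ^ (j + 1)) ^ i) * c j) • (b ^ j * a ^ (m - 1)) := by
  intro m hm
  induction m, hm using Nat.le_induction with
  | base => simpa using hwa
  | succ m hm ih =>
      have hstep : a ^ (m - 1) * a = a ^ m := by
        rw [← pow_succ]; congr 1; omega
      calc w * a ^ (m + 1) = (w * a ^ m) * a := by rw [pow_succ, ← mul_assoc]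
        _ = q ^ m • (a ^ m * (w * a)) +
            ∑ j ∈ Finset.range (d + 1),
              ((∑ i ∈ Finset.range m, (q ^ (j + 1)) ^ i) * c j) • (b ^ j * a ^ m) := by
            rw [ih, add_mul, smul_mul_assoc, mul_assoc, Finset.sum_mul]
            congr 1
            refine Finset.sum_congr rfl fun j _ => ?_
            rw [smul_mul_assoc, mul_assoc, hstep]
        _ = q ^ (m + 1) • (a ^ (m + 1) * w) +
            (∑ j ∈ Finset.range (d + 1), (q ^ m * (c j * q ^ (m * j))) • (b ^ j * a ^ m) +
             ∑ j ∈ Finset.range (d + 1),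
              ((∑ i ∈ Finset.range m, (q ^ (j + 1)) ^ i) * c j) • (b ^ j * a ^ m)) := by
            rw [hwa, mul_add, smul_add, add_assoc]
            congr 1
            · rw [mul_smul_comm, smul_smul, ← mul_assoc, ← pow_succ, ← pow_succ]
            congr 1
            rw [Finset.mul_sum, Finset.smul_sum]
            refine Finset.sum_congr rfl fun j _ => ?_
            rw [mul_smul_comm, aux_comm2 q a b hab m j, smul_smul, smul_smul, mul_assoc]
        _ = q ^ (m + 1) • (a ^ (m + 1) * w) +
            ∑ j ∈ Finset.range (d + 1),
              ((∑ i ∈ Finset.range (m + 1), (q ^ (j + 1)) ^ i) * c j) •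
                (b ^ j * a ^ (m + 1 - 1)) := by
            congr 1
            rw [← Finset.sum_add_distrib]
            refine Finset.sum_congr rfl fun j _ => ?_
            rw [← add_smul]
            congr 1
            rw [Finset.sum_range_succ]
            ring

end Aux

/-- In `B_q(f)`, for every positive integer `m`:
`w uᵐ = qᵐ uᵐ w + ∑_{j=0}^{d} [m]_{q^{j+1}} c_j vʲ uᵐ⁻¹` and
`w vᵐ = q⁻ᵐ vᵐ w + ∑_{j=0}^{d} [m]_{q^{-(j+1)}} c_j uʲ vᵐ⁻¹`,
where `[m]_r := ∑_{i<m} rⁱ`. -/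
theorem bqf_w_power_identities (k : Type*) [Field k] (q : k) (hq : q ≠ 0)
    (d : ℕ) (c : ℕ → k) (m : ℕ) (hm : 0 < m) :
    let u := RingQuot.mkAlgHom k (BqfRel k q d c) (ι k (0 : Fin 3))
    let v := RingQuot.mkAlgHom k (BqfRel k q d c) (ι k (1 : Fin 3))
    let w := RingQuot.mkAlgHom k (BqfRel k q d c) (ι k (2 : Fin 3))
    w * u ^ m = q ^ m • (u ^ m * w) +
        ∑ j ∈ Finset.range (d + 1),
          ((∑ i ∈ Finset.range m, (q ^ (j + 1)) ^ i) * c j) • (v ^ j * u ^ (m - 1)) ∧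
    w * v ^ m = (q⁻¹) ^ m • (v ^ m * w) +
        ∑ j ∈ Finset.range (d + 1),
          ((∑ i ∈ Finset.range m, ((q⁻¹) ^ (j + 1)) ^ i) * c j) • (u ^ j * v ^ (m - 1)) := by
  intro u v w
  have huv : u * v = q • (v * u) := by
    have h := RingQuot.mkAlgHom_rel k (BqfRel.uv (k := k) (q := q) (d := d) (c := c))
    simpa [map_mul] using h
  have hwu : w * u = q • (u * w) + ∑ j ∈ Finset.range (d + 1), c j • v ^ j := by
    have h := RingQuot.mkAlgHom_rel k (BqfRel.wu (k := k) (q := q) (d := d) (c := c))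
    simpa [map_mul, map_add, map_sum, map_pow] using h
  have hwv : w * v = q⁻¹ • (v * w) + ∑ j ∈ Finset.range (d + 1), c j • u ^ j := by
    have h := RingQuot.mkAlgHom_rel k (BqfRel.wv (k := k) (q := q) (d := d) (c := c))
    simpa [map_mul, map_add, map_sum, map_pow] using h
  have hvu : v * u = q⁻¹ • (u * v) := by
    rw [huv, smul_smul, inv_mul_cancel₀ hq, one_smul]
  exact ⟨aux_main q u v w d c huv hwu m hm, aux_main q⁻¹ v u w d c hvu hwv m hm⟩
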